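/- (One step of the extended update contracts toward the orthogonal component.) Let U ∈ ℝ^{m×m₁×p} be such that U_{:j:}^⊤∗U_{:j:} is t-invertible for every j ∈ {1,…,m₁}, and let q be a probability distribution on {1,…,m₁}. Let Y⊥ ∈ ℝ^{m×l×p} satisfy U^⊤∗Y⊥ = 0. For W ∈ ℝ^{m×l×p} and j ∈ {1,…,m₁} define W⁺(j) = W − U_{:j:} ∗ (U_{:j:}^⊤∗U_{:j:})^{-1} ∗ (U_{:j:}^⊤∗W). Then Σ_{j=1}^{m₁} q(j)·‖W⁺(j) − Y⊥‖_F² ≤ (1 − σ_min(Σ_{j=1}^{m₁} q(j)·bcirc(P_{U_{:j:}^⊤})))·‖W − Y⊥‖_F², where P_{U_{:j:}^⊤} = U_{:j:} ∗ (U_{:j:}^⊤∗U_{:j:})^{-1} ∗ U_{:j:}^⊤. -/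

import Mathlib

open Matrix
open scoped BigOperators

/-- A real third-order tensor with row index `I`, column index `J`, and `p` frontal slices. -/
abbrev Tensor (I J : Type*) (p : ℕ) := I → J → Fin p → ℝ

namespace Tensor

variable {I J K : Type*} {p : ℕ}

/-- Block-circulant matricization: `bcirc A [(i,k),(j,l)] = A i j ((k - l) mod p)`. -/
def bcirc (A : Tensor I J p) : Matrix (I × Fin p) (J × Fin p) ℝ :=
  Matrix.of fun ik jl => A ik.1 jl.1 (ik.2 - jl.2)

/-- Unfolding along the second mode: `unfold B [(j,k), i] = B j i k`. -/
def unfold {S : Type*} (B : Tensor J S p) : Matrix (J × Fin p) S ℝ :=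
  Matrix.of fun jk s => B jk.1 s jk.2

/-- The t-product, the unique tensor with `unfold (A ∗ B) = bcirc A * unfold B`. -/
def tprod [Fintype J] (A : Tensor I J p) (B : Tensor J K p) : Tensor I K p :=
  fun i s k => ∑ j : J, ∑ l : Fin p, A i j (k - l) * B j s l

/-- Tensor transpose: `Aᵀ j i k = A i j ((-k) mod p)`. -/
def ttrans (A : Tensor I J p) : Tensor J I p := fun j i k => A i j (-k)

/-- The identity tensor: first frontal slice is the identity, the others are zero. -/
def tid (I : Type*) [DecidableEq I] (p : ℕ) : Tensor I I p :=
  fun i j k => if i = j ∧ (k : ℕ) = 0 then 1 else 0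

/-- t-invertibility of a square tensor. -/
def TInvertible [Fintype I] [DecidableEq I] (S : Tensor I I p) : Prop :=
  ∃ T : Tensor I I p, tprod S T = tid I p ∧ tprod T S = tid I p

open Classical in
/-- The t-inverse of a square tensor (junk value when not t-invertible). -/
noncomputable def tinv [Fintype I] [DecidableEq I] (S : Tensor I I p) : Tensor I I p :=
  if h : TInvertible S then h.choose else 0

/-- The projection tensor `P_M = Mᵀ ∗ (M ∗ Mᵀ)⁻¹ ∗ M`. -/
noncomputable def proj [Fintype I] [DecidableEq I] [Fintype J] (M : Tensor I J p) :
    Tensor J J p :=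
  tprod (ttrans M) (tprod (tinv (tprod M (ttrans M))) M)

/-- The projection tensor `P_{Mᵀ} = M ∗ (Mᵀ ∗ M)⁻¹ ∗ Mᵀ`. -/
noncomputable def projT [Fintype I] [Fintype J] [DecidableEq J] (M : Tensor I J p) :
    Tensor I I p :=
  tprod M (tprod (tinv (tprod (ttrans M) M)) (ttrans M))

/-- The Frobenius inner product of two tensors. -/
def tinner [Fintype I] [Fintype J] (A B : Tensor I J p) : ℝ :=
  ∑ i : I, ∑ j : J, ∑ k : Fin p, A i j k * B i j k

/-- The squared Frobenius norm of a tensor. -/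
def frobSq [Fintype I] [Fintype J] (A : Tensor I J p) : ℝ :=
  ∑ i : I, ∑ j : J, ∑ k : Fin p, (A i j k) ^ 2

/-- The Frobenius norm of a tensor. -/
noncomputable def frobNorm [Fintype I] [Fintype J] (A : Tensor I J p) : ℝ :=
  Real.sqrt (frobSq A)

/-- The subtensor of the row slices of `U` indexed by `μ`. -/
def rowSub (U : Tensor I J p) (μ : Finset I) : Tensor {i // i ∈ μ} J p :=
  fun i => U i.1

/-- The `j`-th lateral slice of `U`, as an `I × 1 × p` tensor. -/
def latSlice (U : Tensor I J p) (j : J) : Tensor I (Fin 1) p :=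
  fun i _ k => U i j k

/-- One (block) Kaczmarz step for the system with operator `U`, sampled row block `μ`,
current iterate `X` and measurement block `Bμ`:
`X ← X - U_μᵀ ∗ (U_μ ∗ U_μᵀ)⁻¹ ∗ (U_μ ∗ X - Bμ)`. -/
noncomputable def kaczStep [DecidableEq I] [Fintype J] (U : Tensor I J p) (μ : Finset I)
    (X : Tensor J K p) (Bμ : Tensor {i // i ∈ μ} K p) : Tensor J K p :=
  X - tprod (ttrans (rowSub U μ))
    (tprod (tinv (tprod (rowSub U μ) (ttrans (rowSub U μ))))
      (tprod (rowSub U μ) X - Bμ))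

/-- One extended (column-like) step:
`W ← W - U_{:j:} ∗ (U_{:j:}ᵀ ∗ U_{:j:})⁻¹ ∗ (U_{:j:}ᵀ ∗ W)`. -/
noncomputable def extStep [Fintype I] (U : Tensor I J p) (j : J) (W : Tensor I K p) :
    Tensor I K p :=
  W - tprod (latSlice U j)
    (tprod (tinv (tprod (ttrans (latSlice U j)) (latSlice U j)))
      (tprod (ttrans (latSlice U j)) W))

end Tensor

/-- Squared Frobenius norm of a real matrix. -/
def matFrobSq {I J : Type*} [Fintype I] [Fintype J] (A : Matrix I J ℝ) : ℝ :=
  ∑ i : I, ∑ j : J, (A i j) ^ 2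

/-- Spectral norm (largest singular value) of a real matrix, as the supremum of `‖A x‖`
over unit vectors `x`. -/
noncomputable def specNorm {I J : Type*} [Fintype I] [Fintype J] (A : Matrix I J ℝ) : ℝ :=
  sSup {r : ℝ | ∃ x : J → ℝ, (∑ j : J, (x j) ^ 2) = 1 ∧
    r = Real.sqrt (∑ i : I, (A.mulVec x i) ^ 2)}

/-- Smallest eigenvalue of a symmetric real matrix, via the Rayleigh quotient:
`σ_min(S) = inf {xᵀ S x : ‖x‖ = 1}`. -/
noncomputable def minEig {I : Type*} [Fintype I] (S : Matrix I I ℝ) : ℝ :=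
  sInf {r : ℝ | ∃ x : I → ℝ, (∑ i : I, (x i) ^ 2) = 1 ∧
    r = ∑ i : I, x i * S.mulVec x i}


namespace Tensor

theorem unfold_tprod' {I J K : Type*} {p : ℕ} [Fintype J] (A : Tensor I J p)
    (B : Tensor J K p) : unfold (tprod A B) = bcirc A * unfold B := by
  ext ⟨j, k⟩ s
  simp [unfold, Tensor.tprod, bcirc, Matrix.mul_apply, Fintype.sum_prod_type]

theorem bcirc_tprod' {I J K : Type*} {p : ℕ} [Fintype J] [NeZero p] (A : Tensor I J p)
    (B : Tensor J K p) : bcirc (tprod A B) = bcirc A * bcirc B := by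
  ext ⟨i, k⟩ ⟨j, l⟩
  simp only [bcirc, Tensor.tprod, Matrix.mul_apply, Fintype.sum_prod_type, Matrix.of_apply]
  refine Finset.sum_congr rfl fun j' _ => ?_
  refine Fintype.sum_equiv (Equiv.addRight l) _ _ fun l' => ?_
  simp only [Equiv.coe_addRight, add_sub_cancel_right]
  have h1 : k - l - l' = k - (l' + l) := by rw [sub_sub, add_comm]
  rw [h1]

theorem bcirc_ttrans' {I J : Type*} {p : ℕ} [NeZero p] (A : Tensor I J p) :
    bcirc (ttrans A) = (bcirc A)ᵀ := by
  ext ⟨j, l⟩ ⟨i, k⟩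
  simp [bcirc, Tensor.ttrans, Matrix.transpose_apply, neg_sub]

theorem bcirc_tid' {I : Type*} {p : ℕ} [DecidableEq I] [NeZero p] :
    bcirc (tid I p) = (1 : Matrix (I × Fin p) (I × Fin p) ℝ) := by
  ext ⟨i, k⟩ ⟨j, l⟩
  simp only [bcirc, tid, Matrix.of_apply, Matrix.one_apply, Prod.mk.injEq]
  have h : ((k - l : Fin p) : ℕ) = 0 ↔ k = l := by
    rw [← sub_eq_zero (a := k)]
    exact ⟨fun h => Fin.ext (by simp [h]), fun h => by simp [h]⟩
  by_cases h1 : i = j <;> by_cases h2 : k = l <;> simp [h1, h2, h]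

theorem unfold_sub' {J S : Type*} {p : ℕ} (A B : Tensor J S p) :
    unfold (A - B) = unfold A - unfold B := rfl

theorem tinv_left' {I : Type*} {p : ℕ} [Fintype I] [DecidableEq I] (S : Tensor I I p)
    (h : TInvertible S) : tprod S (tinv S) = tid I p := by
  rw [tinv, dif_pos h]; exact h.choose_spec.1

end Tensor

theorem Tensor.frobSq_unfold' {I S : Type*} {p : ℕ} [Fintype I] [Fintype S]
    (A : Tensor I S p) : frobSq A = matFrobSq (unfold A) := by
  simp only [frobSq, matFrobSq, unfold, Matrix.of_apply, Fintype.sum_prod_type]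
  exact Finset.sum_congr rfl fun i _ => Finset.sum_comm

theorem rayleighSet_bddBelow' {R : Type*} [Fintype R] (S : Matrix R R ℝ) :
    BddBelow {r : ℝ | ∃ x : R → ℝ, (∑ i : R, (x i) ^ 2) = 1 ∧
      r = ∑ i : R, x i * S.mulVec x i} := by
  refine ⟨-(∑ i : R, ∑ i' : R, |S i i'|), ?_⟩
  rintro r ⟨x, hx, rfl⟩
  have hxb : ∀ i, |x i| ≤ 1 := by
    intro i
    have h1 : x i ^ 2 ≤ 1 := hx ▸ Finset.single_le_sum
      (f := fun i => x i ^ 2) (fun i _ => sq_nonneg _) (Finset.mem_univ i)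
    nlinarith [abs_nonneg (x i), sq_abs (x i)]
  calc -(∑ i : R, ∑ i' : R, |S i i'|) = ∑ i : R, ∑ i' : R, -|S i i'| := by
        simp [Finset.sum_neg_distrib]
    _ ≤ ∑ i : R, ∑ i' : R, x i * (S i i' * x i') := by
        refine Finset.sum_le_sum fun i _ => Finset.sum_le_sum fun i' _ => ?_
        have h2 : |x i * (S i i' * x i')| ≤ |S i i'| := by
          rw [abs_mul, abs_mul]
          have ha := hxb i
          have hb := hxb i'
          have h1 : |x i| * |x i'| ≤ 1 :=
            mul_le_one₀ ha (abs_nonneg _) hb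
          nlinarith [abs_nonneg (S i i'), abs_nonneg (x i), abs_nonneg (x i')]
        linarith [neg_abs_le (x i * (S i i' * x i'))]
    _ = ∑ i : R, x i * S.mulVec x i := by
        refine Finset.sum_congr rfl fun i _ => ?_
        rw [Matrix.mulVec, dotProduct, Finset.mul_sum]

theorem minEig_mul_le' {R : Type*} [Fintype R] (S : Matrix R R ℝ) (x : R → ℝ) :
    minEig S * (∑ i : R, (x i) ^ 2) ≤ ∑ i : R, x i * S.mulVec x i := by
  rcases (Finset.sum_nonneg (fun i (_ : i ∈ Finset.univ) => sq_nonneg (x i))).eq_or_lt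
    with h0 | hpos
  · have hx : ∀ i, x i = 0 := by
      intro i
      have h := (Finset.sum_eq_zero_iff_of_nonneg
        (fun i (_ : i ∈ Finset.univ) => sq_nonneg (x i))).mp h0.symm i (Finset.mem_univ i)
      exact (pow_eq_zero_iff two_ne_zero).mp h
    have h1 : ∑ i : R, x i * S.mulVec x i = 0 :=
      Finset.sum_eq_zero fun i _ => by rw [hx i, zero_mul]
    rw [h1, ← h0, mul_zero]
  · set c := ∑ i : R, (x i) ^ 2 with hc
    have hcpos : 0 < c := hpos
    set u : R → ℝ := fun i => x i / Real.sqrt c with hu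
    have hsq : Real.sqrt c * Real.sqrt c = c := Real.mul_self_sqrt hcpos.le
    have hsqpos : 0 < Real.sqrt c := Real.sqrt_pos.mpr hcpos
    have hunorm : ∑ i : R, (u i) ^ 2 = 1 := by
      simp only [hu, div_pow, ← Finset.sum_div, Real.sq_sqrt hcpos.le]
      exact div_self hcpos.ne'
    have hmv : S.mulVec u = fun i => S.mulVec x i / Real.sqrt c := by
      funext i
      simp only [hu, Matrix.mulVec, dotProduct, div_eq_mul_inv, Finset.sum_mul,
        mul_assoc]
    have hray : ∑ i : R, u i * S.mulVec u i = (∑ i : R, x i * S.mulVec x i) / c := by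
      rw [hmv, Finset.sum_div]
      refine Finset.sum_congr rfl fun i _ => ?_
      simp only [hu]
      rw [div_mul_div_comm, hsq]
    have hmem : (∑ i : R, u i * S.mulVec u i) ∈ {r : ℝ | ∃ x : R → ℝ,
        (∑ i : R, (x i) ^ 2) = 1 ∧ r = ∑ i : R, x i * S.mulVec x i} := ⟨u, hunorm, rfl⟩
    have hle : minEig S ≤ (∑ i : R, x i * S.mulVec x i) / c := by
      rw [← hray]; exact csInf_le (rayleighSet_bddBelow' S) hmem
    exact (le_div_iff₀ hcpos).mp hle

theorem matFrobSq_eq_trace' {R C : Type*} [Fintype R] [Fintype C] (a : Matrix R C ℝ) :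
    matFrobSq a = Matrix.trace (aᵀ * a) := by
  simp only [matFrobSq, Matrix.trace, Matrix.diag, Matrix.mul_apply,
    Matrix.transpose_apply, sq]
  exact Finset.sum_comm

theorem keyContraction' {R C ι : Type*} [Fintype R] [Fintype C] [Fintype ι]
    (M : ι → Matrix R R ℝ) (q : ι → ℝ) (hqs : ∑ j, q j = 1)
    (hsym : ∀ j, (M j)ᵀ = M j) (hidem : ∀ j, M j * M j = M j)
    (z : Matrix R C ℝ) :
    ∑ j, q j * matFrobSq (z - M j * z) ≤
      (1 - minEig (∑ j, q j • M j)) * matFrobSq z := by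
  have hstep : ∀ j, matFrobSq (z - M j * z)
      = matFrobSq z - Matrix.trace (zᵀ * (M j * z)) := by
    intro j
    rw [matFrobSq_eq_trace', matFrobSq_eq_trace']
    have h1 : (z - M j * z)ᵀ * (z - M j * z) = zᵀ * z - zᵀ * (M j * z) := by
      rw [Matrix.transpose_sub, Matrix.transpose_mul, hsym j, Matrix.sub_mul,
        Matrix.mul_sub, Matrix.mul_sub]
      have h2 : zᵀ * M j * (M j * z) = zᵀ * (M j * z) := by
        rw [Matrix.mul_assoc, ← Matrix.mul_assoc (M j), hidem j]
      have h3 : zᵀ * M j * z = zᵀ * (M j * z) := Matrix.mul_assoc _ _ _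
      rw [h2, h3]
      abel
    rw [h1, Matrix.trace_sub]
  have hS : zᵀ * ((∑ j, q j • M j) * z) = ∑ j, q j • (zᵀ * (M j * z)) := by
    rw [Matrix.sum_mul, Matrix.mul_sum]
    exact Finset.sum_congr rfl fun j _ => by rw [Matrix.smul_mul, Matrix.mul_smul]
  have hsum : ∑ j, q j * matFrobSq (z - M j * z)
      = matFrobSq z - Matrix.trace (zᵀ * ((∑ j, q j • M j) * z)) := by
    simp only [hstep, mul_sub]
    rw [Finset.sum_sub_distrib, ← Finset.sum_mul, hqs, one_mul]
    congr 1
    rw [hS, Matrix.trace_sum]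
    exact Finset.sum_congr rfl fun j _ => by rw [Matrix.trace_smul, smul_eq_mul]
  rw [hsum]
  have hmin : minEig (∑ j, q j • M j) * matFrobSq z
      ≤ Matrix.trace (zᵀ * ((∑ j, q j • M j) * z)) := by
    set S := ∑ j, q j • M j with hSdef
    have htr : Matrix.trace (zᵀ * (S * z))
        = ∑ s : C, ∑ r : R, z r s * S.mulVec (fun r' => z r' s) r := by
      simp only [Matrix.trace, Matrix.diag, Matrix.mul_apply, Matrix.mulVec,
        dotProduct, Matrix.transpose_apply]
    have hfr : matFrobSq z = ∑ s : C, ∑ r : R, (z r s) ^ 2 := Finset.sum_comm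
    rw [htr, hfr, Finset.mul_sum]
    exact Finset.sum_le_sum fun s _ => minEig_mul_le' S _
  nlinarith [hmin]

open Tensor in
/-- one step of the extended update contracts toward the orthogonal component:
for `Y⊥` with `Uᵀ∗Y⊥ = 0` and `W⁺(j) = W − U_{:j:}∗(U_{:j:}ᵀ∗U_{:j:})⁻¹∗(U_{:j:}ᵀ∗W)`,
`Σ_j q j ‖W⁺(j) − Y⊥‖_F² ≤ (1 − σ_min(Σ_j q j • bcirc P_{U_{:j:}ᵀ})) ‖W − Y⊥‖_F²`. -/
theorem stmt8 {m m₁ l p : ℕ} (U : Tensor (Fin m) (Fin m₁) p)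
    (hinv : ∀ j : Fin m₁, TInvertible (tprod (ttrans (latSlice U j)) (latSlice U j)))
    (q : Fin m₁ → ℝ) (hq : ∀ j, 0 ≤ q j) (hqsum : ∑ j, q j = 1)
    (Yp : Tensor (Fin m) (Fin l) p) (hYp : tprod (ttrans U) Yp = 0)
    (W : Tensor (Fin m) (Fin l) p) :
    ∑ j : Fin m₁, q j * frobSq (extStep U j W - Yp) ≤
      (1 - minEig (∑ j : Fin m₁, q j • bcirc (projT (latSlice U j)))) *
        frobSq (W - Yp) := by
  rcases p with _ | p'
  · simp [Tensor.frobSq]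
  · set A : Fin m₁ → Matrix (Fin m × Fin (p' + 1)) (Fin 1 × Fin (p' + 1)) ℝ :=
      fun j => bcirc (latSlice U j) with hA
    set V : Fin m₁ → Matrix (Fin 1 × Fin (p' + 1)) (Fin 1 × Fin (p' + 1)) ℝ :=
      fun j => bcirc (tinv (tprod (ttrans (latSlice U j)) (latSlice U j))) with hV
    have hM : ∀ j, bcirc (projT (latSlice U j)) = A j * (V j * (A j)ᵀ) := by
      intro j
      rw [projT, bcirc_tprod', bcirc_tprod', bcirc_ttrans']
    have hGV : ∀ j, ((A j)ᵀ * A j) * V j = 1 := by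
      intro j
      have h := congrArg bcirc (tinv_left' _ (hinv j))
      rwa [bcirc_tprod', bcirc_tprod', bcirc_ttrans', bcirc_tid'] at h
    have hVsym : ∀ j, (V j)ᵀ = V j := by
      intro j
      have h1 : (V j)ᵀ * ((A j)ᵀ * A j) = 1 := by
        have h := congrArg Matrix.transpose (hGV j)
        rwa [Matrix.transpose_mul, Matrix.transpose_mul, Matrix.transpose_transpose,
          Matrix.transpose_one] at h
      calc (V j)ᵀ = (V j)ᵀ * (((A j)ᵀ * A j) * V j) := by rw [hGV j, Matrix.mul_one]
        _ = ((V j)ᵀ * ((A j)ᵀ * A j)) * V j := (Matrix.mul_assoc _ _ _).symm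
        _ = V j := by rw [h1, Matrix.one_mul]
    have hMsym : ∀ j, (A j * (V j * (A j)ᵀ))ᵀ = A j * (V j * (A j)ᵀ) := by
      intro j
      rw [Matrix.transpose_mul, Matrix.transpose_mul, Matrix.transpose_transpose,
        hVsym j, Matrix.mul_assoc]
    have hMidem : ∀ j,
        (A j * (V j * (A j)ᵀ)) * (A j * (V j * (A j)ᵀ)) = A j * (V j * (A j)ᵀ) := by
      intro j
      have h : ((V j * (A j)ᵀ) * A j) * V j = V j := by
        rw [Matrix.mul_assoc (V j), Matrix.mul_assoc (V j), hGV j, Matrix.mul_one]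
      have h2 : (V j * (A j)ᵀ) * (A j * (V j * (A j)ᵀ)) = V j * (A j)ᵀ := by
        rw [← Matrix.mul_assoc, ← Matrix.mul_assoc, h]
      rw [Matrix.mul_assoc, h2]
    have hAy : ∀ j, (A j)ᵀ * unfold Yp = 0 := by
      intro j
      ext ⟨c, k⟩ s
      have h0 : tprod (ttrans U) Yp j s k = 0 := by rw [hYp]; rfl
      simp only [Tensor.tprod, Tensor.ttrans, neg_sub] at h0
      simp only [hA, Matrix.mul_apply, Matrix.transpose_apply, bcirc, latSlice, unfold,
        Matrix.of_apply, Matrix.zero_apply, Fintype.sum_prod_type]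
      rw [← h0]
    have hstep : ∀ j, unfold (extStep U j W - Yp) =
        unfold (W - Yp) - (A j * (V j * (A j)ᵀ)) * unfold (W - Yp) := by
      intro j
      have hMy : (A j * (V j * (A j)ᵀ)) * unfold Yp = 0 := by
        rw [Matrix.mul_assoc, Matrix.mul_assoc, hAy j, Matrix.mul_zero, Matrix.mul_zero]
      have hMw : (A j * (V j * (A j)ᵀ)) * unfold W = A j * (V j * ((A j)ᵀ * unfold W)) := by
        rw [Matrix.mul_assoc, Matrix.mul_assoc]
      unfold Tensor.extStep
      rw [unfold_sub', unfold_sub', unfold_tprod', unfold_tprod', unfold_tprod',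
        bcirc_ttrans', unfold_sub', Matrix.mul_sub, hMy, sub_zero, hMw]
      abel
    have hL : ∀ j, frobSq (extStep U j W - Yp) = matFrobSq
        (unfold (W - Yp) - bcirc (projT (latSlice U j)) * unfold (W - Yp)) := by
      intro j
      rw [frobSq_unfold', hstep j, hM j]
    have hR : frobSq (W - Yp) = matFrobSq (unfold (W - Yp)) := frobSq_unfold' _
    simp only [hL, hR]
    exact keyContraction' _ q hqsum (fun j => by rw [hM j]; exact hMsym j)
      (fun j => by rw [hM j]; exact hMidem j) _
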